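/- arXiv:1203.3313 — 4 statements merged into one kernel-verified Lean document; each statement's English description precedes it below -/
import Mathlib

section
/- Let F be a family of Borel functions f : ℝ^s → ℝ such that f∘Y is P-integrable for every f ∈ F. Assume the central subspace S_{Y|X} is itself a dimension reduction subspace. Then the linear span of the union of the central mean subspaces, span{ S_{E[f(Y)|X]} : f ∈ F } (the supremum of these subspaces in the lattice of subspaces of ℝ^p), is contained in the central subspace S_{Y|X}. (Lemma 1, part 1.) -/
open MeasureTheory ProbabilityTheory Filter

/-- The map `x ↦ P_S x`, the orthogonal projection onto `S` viewed as a map of the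
ambient Euclidean space. -/
noncomputable def projFn {p : ℕ} (S : Submodule ℝ (EuclideanSpace ℝ (Fin p))) :
    EuclideanSpace ℝ (Fin p) → EuclideanSpace ℝ (Fin p) :=
  fun v => (S.orthogonalProjection v : EuclideanSpace ℝ (Fin p))

/-- The σ-algebra `σ(P_S ∘ X)` generated by the projected random vector. -/
noncomputable def sigmaProj {Ω : Type*} {p : ℕ}
    (S : Submodule ℝ (EuclideanSpace ℝ (Fin p))) (X : Ω → EuclideanSpace ℝ (Fin p)) :
    MeasurableSpace Ω :=
  MeasurableSpace.comap (fun ω => projFn S (X ω)) inferInstance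

lemma sigmaProj_le {Ω : Type*} {p : ℕ} [mΩ : MeasurableSpace Ω]
    (S : Submodule ℝ (EuclideanSpace ℝ (Fin p))) {X : Ω → EuclideanSpace ℝ (Fin p)}
    (hX : Measurable X) : sigmaProj S X ≤ mΩ := by
  have h : Measurable (fun ω => projFn S (X ω)) := by
    have : Measurable (projFn S) :=
      (S.subtypeL.comp S.orthogonalProjection).continuous.measurable
    exact this.comp hX
  exact h.comap_le

/-- `S` is a dimension reduction subspace: `Y ⫫ X | σ(P_S ∘ X)`. -/
def IsDRS {Ω : Type*} {p s : ℕ} [mΩ : MeasurableSpace Ω] [StandardBorelSpace Ω]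
    (P : Measure Ω) [IsFiniteMeasure P]
    (X : Ω → EuclideanSpace ℝ (Fin p)) (Y : Ω → EuclideanSpace ℝ (Fin s))
    (hX : Measurable X) (S : Submodule ℝ (EuclideanSpace ℝ (Fin p))) : Prop :=
  CondIndep (sigmaProj S X) (MeasurableSpace.comap Y inferInstance)
    (MeasurableSpace.comap X inferInstance) (sigmaProj_le S hX) P

/-- The central subspace `S_{Y|X}`: the intersection of all dimension reduction subspaces. -/
noncomputable def centralSubspace {Ω : Type*} {p s : ℕ} [mΩ : MeasurableSpace Ω]
    [StandardBorelSpace Ω] (P : Measure Ω) [IsFiniteMeasure P]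
    (X : Ω → EuclideanSpace ℝ (Fin p)) (Y : Ω → EuclideanSpace ℝ (Fin s))
    (hX : Measurable X) : Submodule ℝ (EuclideanSpace ℝ (Fin p)) :=
  sInf {S | IsDRS P X Y hX S}

/-- `S` is a mean dimension reduction subspace for `f`:
`E[f(Y) | σ(X)] = E[f(Y) | σ(P_S ∘ X)]` a.e. -/
def IsMeanDRS {Ω : Type*} {p s : ℕ} [mΩ : MeasurableSpace Ω] (P : Measure Ω)
    (X : Ω → EuclideanSpace ℝ (Fin p)) (Y : Ω → EuclideanSpace ℝ (Fin s))
    (f : EuclideanSpace ℝ (Fin s) → ℝ) (S : Submodule ℝ (EuclideanSpace ℝ (Fin p))) : Prop :=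
  P[(fun ω => f (Y ω))|MeasurableSpace.comap X inferInstance]
    =ᵐ[P] P[(fun ω => f (Y ω))|sigmaProj S X]

/-- The central mean subspace `S_{E[f(Y)|X]}`: the intersection of all mean dimension
reduction subspaces for `f`. -/
noncomputable def centralMeanSubspace {Ω : Type*} {p s : ℕ} [mΩ : MeasurableSpace Ω]
    (P : Measure Ω) (X : Ω → EuclideanSpace ℝ (Fin p)) (Y : Ω → EuclideanSpace ℝ (Fin s))
    (f : EuclideanSpace ℝ (Fin s) → ℝ) : Submodule ℝ (EuclideanSpace ℝ (Fin p)) :=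
  sInf {S | IsMeanDRS P X Y f S}

section Aux

open MeasureTheory

/-- Key integral identity under conditional independence. -/
lemma setIntegral_condexp_indicator_of_condIndep
    {Ω : Type*} {m' m₁ m₂ : MeasurableSpace Ω} [mΩ : MeasurableSpace Ω] [StandardBorelSpace Ω] (hm' : m' ≤ mΩ)
    (hm₁ : m₁ ≤ mΩ) (hm₂ : m₂ ≤ mΩ)
    {μ : Measure Ω} [IsProbabilityMeasure μ]
    (hindep : CondIndep m' m₁ m₂ hm' μ)
    {t s : Set Ω} (ht : MeasurableSet[m₁] t) (hs : MeasurableSet[m₂] s) :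
    ∫ x in s, (μ⟦t | m'⟧) x ∂μ = (μ (t ∩ s)).toReal := by
  have h_ind : (μ⟦t ∩ s | m'⟧) =ᵐ[μ] (μ⟦t | m'⟧) * (μ⟦s | m'⟧) :=
    ((condIndep_iff m' m₁ m₂ hm' hm₁ hm₂ μ).mp hindep) t s ht hs
  have hs_int : Integrable (s.indicator (fun _ => (1 : ℝ))) μ :=
    (integrable_const (1 : ℝ)).indicator (hm₂ _ hs)
  have h_mul_int : Integrable ((μ⟦t | m'⟧) * s.indicator (fun _ => (1 : ℝ))) μ := by
    have : (μ⟦t | m'⟧) * s.indicator (fun _ => (1 : ℝ)) = s.indicator (μ⟦t | m'⟧) := by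
      funext x
      by_cases hx : x ∈ s <;> simp [Set.indicator_of_mem, Set.indicator_of_notMem, hx]
    rw [this]
    exact integrable_condExp.indicator (hm₂ _ hs)
  -- pull-out property
  have h_pull : μ[(μ⟦t | m'⟧) * s.indicator (fun _ => (1 : ℝ)) | m']
      =ᵐ[μ] (μ⟦t | m'⟧) * (μ⟦s | m'⟧) :=
    condExp_mul_of_stronglyMeasurable_left stronglyMeasurable_condExp h_mul_int hs_int
  calc ∫ x in s, (μ⟦t | m'⟧) x ∂μ
      = ∫ x, s.indicator (μ⟦t | m'⟧) x ∂μ := (integral_indicator (hm₂ _ hs)).symm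
    _ = ∫ x, ((μ⟦t | m'⟧) * s.indicator (fun _ => (1 : ℝ))) x ∂μ := by
        refine integral_congr_ae (Filter.Eventually.of_forall fun x => ?_)
        by_cases hx : x ∈ s <;>
          simp [Set.indicator_of_mem, Set.indicator_of_notMem, hx]
    _ = ∫ x, (μ[(μ⟦t | m'⟧) * s.indicator (fun _ => (1 : ℝ)) | m']) x ∂μ :=
        (integral_condExp hm').symm
    _ = ∫ x, ((μ⟦t | m'⟧) * (μ⟦s | m'⟧)) x ∂μ := integral_congr_ae h_pull
    _ = ∫ x, (μ⟦t ∩ s | m'⟧) x ∂μ := (integral_congr_ae h_ind).symm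
    _ = ∫ x, (t ∩ s).indicator (fun _ => (1 : ℝ)) x ∂μ :=
        integral_condExp hm'
    _ = (μ (t ∩ s)).toReal := by
        rw [integral_indicator ((hm₁ _ ht).inter (hm₂ _ hs))]
        simp [Measure.restrict_apply_univ]
        rfl

/-- If `Y ⫫ X | m'` (conditional independence of `m₁` and `m₂` given `m'`), `m' ≤ m₂`, and `g`
is an integrable `m₁`-measurable function, then `E[g | m₂] = E[g | m']` a.e. -/
lemma condexp_eq_condexp_of_condIndep
    {Ω : Type*} {m' m₁ m₂ : MeasurableSpace Ω} [mΩ : MeasurableSpace Ω] [StandardBorelSpace Ω] (hm' : m' ≤ mΩ) (hm'₂ : m' ≤ m₂)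
    (hm₁ : m₁ ≤ mΩ) (hm₂ : m₂ ≤ mΩ)
    {μ : Measure Ω} [IsProbabilityMeasure μ]
    (hindep : CondIndep m' m₁ m₂ hm' μ)
    {g : Ω → ℝ} (hg : StronglyMeasurable[m₁] g) (hgint : Integrable g μ) :
    μ[g|m₂] =ᵐ[μ] μ[g|m'] := by
  refine (ae_eq_condExp_of_forall_setIntegral_eq hm₂ hgint
    (fun s _ _ => integrable_condExp.integrableOn) (fun s hms hμs => ?_)
    ((stronglyMeasurable_condExp.mono hm'₂).aestronglyMeasurable)).symm
  -- goal : ∫ x in s, (μ[g|m']) x ∂μ = ∫ x in s, g x ∂μ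
  rw [← memLp_one_iff_integrable] at hgint
  refine MemLp.induction_stronglyMeasurable hm₁ ENNReal.one_ne_top
    (fun g => ∫ x in s, (μ[g|m']) x ∂μ = ∫ x in s, g x ∂μ) ?_ ?_ ?_ ?_ hgint
    hg.aestronglyMeasurable
  · -- indicator case
    intro c t hmt _
    have h_eq : t.indicator (fun _ => c) = c • t.indicator (fun _ => (1 : ℝ)) := by
      funext x
      by_cases hx : x ∈ t <;>
        simp [Set.indicator_of_mem, Set.indicator_of_notMem, hx]
    rw [h_eq]
    have h_smul : μ[c • t.indicator (fun _ => (1 : ℝ))|m'] =ᵐ[μ] c • (μ⟦t | m'⟧) :=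
      condExp_smul c _ _
    rw [setIntegral_congr_ae (hm₂ _ hms) (h_smul.mono fun x hx _ => hx)]
    have h_key := setIntegral_condexp_indicator_of_condIndep hm' hm₁ hm₂ hindep hmt hms
    have h2 : ∫ x in s, t.indicator (fun _ => (1 : ℝ)) x ∂μ = (μ (t ∩ s)).toReal := by
      rw [setIntegral_indicator (hm₁ _ hmt), setIntegral_const, smul_eq_mul, mul_one,
        Set.inter_comm]
      rfl
    simp only [Pi.smul_apply, smul_eq_mul]
    rw [integral_const_mul, integral_const_mul, h_key, h2]
  · -- additivity
    intro u v _ huint hvint _ _ hu_eq hv_eq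
    rw [memLp_one_iff_integrable] at huint hvint
    have h_add : μ[u + v|m'] =ᵐ[μ] μ[u|m'] + μ[v|m'] := condExp_add huint hvint m'
    rw [setIntegral_congr_ae (hm₂ _ hms) (h_add.mono fun x hx _ => hx)]
    rw [integral_add' huint.integrableOn hvint.integrableOn,
      integral_add' integrable_condExp.integrableOn integrable_condExp.integrableOn,
      hu_eq, hv_eq]
  · -- closedness
    have heq₁ : (fun f : lpMeas ℝ ℝ m₁ 1 μ => ∫ x in s, (μ[(f : Ω → ℝ)|m']) x ∂μ) =
        (fun f : Lp ℝ 1 μ => ∫ x in s, (condExpL1CLM ℝ hm' μ f : Ω → ℝ) x ∂μ) ∘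
          (lpMeasSubgroup ℝ m₁ 1 μ).subtype ∘ fun f => f := by
      refine funext fun f => ?_
      refine setIntegral_congr_ae (hm₂ _ hms) ?_
      have h1 : μ[(f : Ω → ℝ)|m'] =ᵐ[μ]
          condExpL1CLM ℝ hm' μ ((Lp.memLp (f : Lp ℝ 1 μ)).integrable le_rfl |>.toL1 _) :=
        condExp_ae_eq_condExpL1CLM hm' ((Lp.memLp (f : Lp ℝ 1 μ)).integrable le_rfl)
      rw [Integrable.toL1_coeFn] at h1
      exact h1.mono fun x hx _ => hx
    have heq₂ : (fun f : lpMeas ℝ ℝ m₁ 1 μ => ∫ x in s, (f : Ω → ℝ) x ∂μ) =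
        (fun f : Lp ℝ 1 μ => ∫ x in s, f x ∂μ) ∘ (lpMeasSubgroup ℝ m₁ 1 μ).subtype ∘
          fun f => f := rfl
    refine isClosed_eq ?_ ?_
    · rw [heq₁]
      exact ((continuous_setIntegral s).comp (condExpL1CLM ℝ hm' μ).continuous).comp
        (continuous_subtype_val.comp continuous_id)
    · rw [heq₂]
      exact (continuous_setIntegral s).comp (continuous_subtype_val.comp continuous_id)
  · -- ae congruence
    intro u v huv _ hu_eq
    have h1 : μ[u|m'] =ᵐ[μ] μ[v|m'] := condExp_congr_ae huv
    rw [← setIntegral_congr_ae (hm₂ _ hms) (h1.mono fun x hx _ => hx),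
      ← setIntegral_congr_ae (hm₂ _ hms) (huv.mono fun x hx _ => hx)]
    exact hu_eq

/-- `sigmaProj S X ≤ σ(X)`. -/
lemma sigmaProj_le_comap {Ω : Type*} {p : ℕ}
    (S : Submodule ℝ (EuclideanSpace ℝ (Fin p))) (X : Ω → EuclideanSpace ℝ (Fin p)) :
    sigmaProj S X ≤ MeasurableSpace.comap X inferInstance := by
  have hproj : Measurable (projFn S) :=
    (S.subtypeL.comp S.orthogonalProjection).continuous.measurable
  have h : sigmaProj S X =
      MeasurableSpace.comap X (MeasurableSpace.comap (projFn S) inferInstance) := by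
    rw [sigmaProj, show (fun ω => projFn S (X ω)) = projFn S ∘ X from rfl,
      ← MeasurableSpace.comap_comp]
  rw [h]
  exact MeasurableSpace.comap_mono hproj.comap_le

end Aux

/-- Lemma 1, part 1: if the central subspace is itself a dimension reduction subspace, then
the span of the central mean subspaces over a family `F` of integrable transformations of `Y`
is contained in the central subspace. -/
theorem span_centralMeanSubspaces_le_centralSubspace
    {Ω : Type*} {p s : ℕ} [mΩ : MeasurableSpace Ω] [StandardBorelSpace Ω]
    (P : Measure Ω) [IsProbabilityMeasure P]
    (X : Ω → EuclideanSpace ℝ (Fin p)) (Y : Ω → EuclideanSpace ℝ (Fin s))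
    (hX : Measurable X) (hY : Measurable Y)
    (F : Set (EuclideanSpace ℝ (Fin s) → ℝ))
    (hFmeas : ∀ f ∈ F, Measurable f)
    (hFint : ∀ f ∈ F, Integrable (fun ω => f (Y ω)) P)
    (hcentral : IsDRS P X Y hX (centralSubspace P X Y hX)) :
    (⨆ f ∈ F, centralMeanSubspace P X Y f) ≤ centralSubspace P X Y hX := by
  refine iSup₂_le fun f hf => ?_
  refine sInf_le ?_
  -- show the central subspace is a mean DRS for `f`
  show IsMeanDRS P X Y f (centralSubspace P X Y hX)
  have hYmeas : Measurable[MeasurableSpace.comap Y inferInstance] (fun ω => f (Y ω)) :=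
    (hFmeas f hf).comp (Measurable.of_comap_le le_rfl)
  exact condexp_eq_condexp_of_condIndep (sigmaProj_le _ hX)
    (sigmaProj_le_comap _ X) hY.comap_le hX.comap_le hcentral
    hYmeas.stronglyMeasurable (hFint f hf)
end

section
/- Suppose there exist finitely many measurable sets Λ_1, …, Λ_d ⊆ 𝒯 with μ(Λ_u) < 1 for each u = 1, …, d, such that for every m ≥ 1 and every t_1, …, t_m ∈ 𝒯 with S(t_1) + ⋯ + S(t_m) ≠ S₀ there exists u ∈ {1, …, d} with t_i ∈ Λ_u for all i = 1, …, m. Then lim_{m→∞} P( S(T_1) + ⋯ + S(T_m) = S₀ ) = 1. -/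
open MeasureTheory ProbabilityTheory Filter

/-- If, whenever finitely many subspaces `S(t_1), …, S(t_m)` fail to span `S₀`, all of
`t_1, …, t_m` lie in one of finitely many sets `Λ_u` of measure less than one, then
`P(S(T_1) + ⋯ + S(T_m) = S₀) → 1` as `m → ∞`. -/
theorem tendsto_prob_span_eq
    {Ω 𝒯 V : Type*} [MeasurableSpace Ω] [m𝒯 : MeasurableSpace 𝒯]
    [NormedAddCommGroup V] [InnerProductSpace ℝ V] [FiniteDimensional ℝ V]
    (P : Measure Ω) [IsProbabilityMeasure P] (μ : Measure 𝒯)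
    (T : ℕ → Ω → 𝒯) (hTmeas : ∀ i, Measurable (T i))
    (hindep : iIndepFun (m := fun _ => m𝒯) T P)
    (hdist : ∀ i, P.map (T i) = μ)
    (S₀ : Submodule ℝ V) (S : 𝒯 → Submodule ℝ V) (hS : ∀ t, S t ≤ S₀)
    (d : ℕ) (Λ : Fin d → Set 𝒯) (hΛmeas : ∀ u, MeasurableSet (Λ u))
    (hΛμ : ∀ u, μ (Λ u) < 1)
    (hcover : ∀ m : ℕ, 1 ≤ m → ∀ t : Fin m → 𝒯, (⨆ i, S (t i)) ≠ S₀ →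
      ∃ u, ∀ i, t i ∈ Λ u) :
    Filter.Tendsto (fun m : ℕ => P {ω | (⨆ i : Fin m, S (T i ω)) = S₀})
      Filter.atTop (nhds 1) := by
  set ε : ℕ → ENNReal := fun m => ∑ u : Fin d, μ (Λ u) ^ m with hε
  -- each single probability
  have hsingle : ∀ u i, P (T i ⁻¹' Λ u) = μ (Λ u) := by
    intro u i
    rw [← hdist i, Measure.map_apply (hTmeas i) (hΛmeas u)]
  -- probability that all first m lie in Λ u
  have hall : ∀ (u : Fin d) (m : ℕ),
      P (⋂ i ∈ Finset.range m, T i ⁻¹' Λ u) = μ (Λ u) ^ m := by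
    intro u m
    rw [hindep.meas_biInter (S := Finset.range m)
      (fun i _ => ⟨Λ u, hΛmeas u, rfl⟩)]
    simp [hsingle u]
  -- lower bound for m ≥ 1
  have hlb : ∀ m : ℕ, 1 ≤ m →
      1 - ε m ≤ P {ω | (⨆ i : Fin m, S (T i ω)) = S₀} := by
    intro m hm
    set G := {ω | (⨆ i : Fin m, S (T i ω)) = S₀} with hG
    have hsub : Gᶜ ⊆ ⋃ u : Fin d, ⋂ i ∈ Finset.range m, T i ⁻¹' Λ u := by
      intro ω hω
      obtain ⟨u, hu⟩ := hcover m hm (fun i => T i ω) hω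
      refine Set.mem_iUnion.2 ⟨u, ?_⟩
      simp only [Set.mem_iInter, Finset.mem_range]
      intro i hi
      exact hu ⟨i, hi⟩
    have hGc : P Gᶜ ≤ ε m := by
      calc P Gᶜ ≤ ∑ u : Fin d, P (⋂ i ∈ Finset.range m, T i ⁻¹' Λ u) :=
            (measure_mono hsub).trans (measure_iUnion_fintype_le _ _)
        _ = ε m := Finset.sum_congr rfl fun u _ => hall u m
    have h1 : (1 : ENNReal) ≤ P G + P Gᶜ := by
      calc (1 : ENNReal) = P Set.univ := (measure_univ (μ := P)).symm
        _ ≤ P G + P Gᶜ := by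
            rw [← Set.union_compl_self G]; exact measure_union_le _ _
    calc 1 - ε m ≤ 1 - P Gᶜ := tsub_le_tsub_left hGc 1
      _ ≤ P G := tsub_le_iff_right.2 h1
  have hε0 : Filter.Tendsto ε Filter.atTop (nhds 0) := by
    have : Filter.Tendsto (fun m => ∑ u : Fin d, μ (Λ u) ^ m) Filter.atTop
        (nhds (∑ _u : Fin d, (0 : ENNReal))) := by
      exact tendsto_finset_sum _ (fun u _ =>
        ENNReal.tendsto_pow_atTop_nhds_zero_of_lt_one (hΛμ u))
    simpa using this
  have hlo : Filter.Tendsto (fun m => 1 - ε m) Filter.atTop (nhds 1) := by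
    have := ENNReal.Tendsto.sub (tendsto_const_nhds (x := (1 : ENNReal))) hε0
      (Or.inl ENNReal.one_ne_top)
    simpa using this
  refine tendsto_of_tendsto_of_tendsto_of_le_of_le' hlo tendsto_const_nhds ?_ ?_
  · exact Filter.eventually_atTop.2 ⟨1, hlb⟩
  · exact Filter.Eventually.of_forall (fun m => prob_le_one)
end

section
/- Let m be a sub-σ-algebra of 𝒜 with m ⊆ σ(X). If for every Borel set B ⊆ ℝ^s one has E[1_B∘Y | σ(X)] = E[1_B∘Y | m] P-almost everywhere, then Y and X are conditionally independent given m. -/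
open MeasureTheory ProbabilityTheory


private lemma aux_indicator_integrable {Ω : Type*} [mΩ : MeasurableSpace Ω]
    (P : Measure Ω) [IsFiniteMeasure P] {t : Set Ω} (ht : MeasurableSet t) :
    Integrable (t.indicator (fun _ => (1 : ℝ))) P :=
  (integrable_const (1:ℝ)).indicator ht

/-- If `m ⊆ σ(X)` and for every Borel set `B ⊆ ℝ^s` one has
`E[1_B∘Y | σ(X)] = E[1_B∘Y | m]` a.e., then `Y` and `X` are conditionally independent
given `m`. -/
theorem condIndep_of_condexp_indicator_eq
    {Ω : Type*} {p s : ℕ} [mΩ : MeasurableSpace Ω] [StandardBorelSpace Ω]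
    (P : Measure Ω) [IsProbabilityMeasure P]
    (X : Ω → EuclideanSpace ℝ (Fin p)) (Y : Ω → EuclideanSpace ℝ (Fin s))
    (hX : Measurable X) (hY : Measurable Y)
    (m : MeasurableSpace Ω) (hm : m ≤ MeasurableSpace.comap X inferInstance)
    (hcond : ∀ B : Set (EuclideanSpace ℝ (Fin s)), MeasurableSet B →
      P[(fun ω => B.indicator (fun _ => (1 : ℝ)) (Y ω))|MeasurableSpace.comap X inferInstance]
        =ᵐ[P] P[(fun ω => B.indicator (fun _ => (1 : ℝ)) (Y ω))|m]) :
    CondIndep m (MeasurableSpace.comap Y inferInstance) (MeasurableSpace.comap X inferInstance)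
      (hm.trans hX.comap_le) P := by
  classical
  have hmX : MeasurableSpace.comap X inferInstance ≤ mΩ := hX.comap_le
  have hmY : MeasurableSpace.comap Y inferInstance ≤ mΩ := hY.comap_le
  rw [condIndep_iff _ _ _ _ hmY hmX]
  rintro t1 t2 ht1 ht2
  obtain ⟨B, hB, rfl⟩ := ht1
  set f : Ω → ℝ := fun ω => B.indicator (fun _ => (1 : ℝ)) (Y ω) with hf_def
  have hf_eq : (Y ⁻¹' B).indicator (fun _ => (1 : ℝ)) = f := by
    funext ω
    by_cases h : Y ω ∈ B <;>
      simp [hf_def, Set.indicator_apply, Set.mem_preimage, h]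
  set g : Ω → ℝ := t2.indicator (fun _ => (1 : ℝ)) with hg_def
  have ht2' : MeasurableSet[mΩ] t2 := hmX _ ht2
  have hf_int : Integrable f P := by
    rw [← hf_eq]
    exact @aux_indicator_integrable Ω mΩ P (by infer_instance) _ (hY hB)
  have hg_int : Integrable g P := @aux_indicator_integrable Ω mΩ P (by infer_instance) _ ht2'
  have hg_bdd : ∀ ω, ‖g ω‖ ≤ 1 := by
    intro ω
    by_cases h : ω ∈ t2 <;> simp [hg_def, Set.indicator_apply, h]
  have hfg_eq : (Y ⁻¹' B ∩ t2).indicator (fun _ => (1 : ℝ)) = g * f := by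
    funext ω
    by_cases h1 : Y ω ∈ B <;> by_cases h2 : ω ∈ t2 <;>
      simp [hg_def, ← hf_eq, Set.indicator_apply, h1, h2, Set.mem_inter_iff,
        Set.mem_preimage]
  have hgf_int : Integrable (g * f) P := by
    rw [← hfg_eq]
    exact @aux_indicator_integrable Ω mΩ P (by infer_instance) _ ((hY hB).inter ht2')
  have hg_meas : StronglyMeasurable[MeasurableSpace.comap X inferInstance] g :=
    stronglyMeasurable_const.indicator ht2
  have step1 : P[g * f|MeasurableSpace.comap X inferInstance]
      =ᵐ[P] g * P[f|MeasurableSpace.comap X inferInstance] :=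
    condExp_mul_of_stronglyMeasurable_left hg_meas hgf_int hf_int
  have step2 : g * P[f|MeasurableSpace.comap X inferInstance] =ᵐ[P] g * P[f|m] :=
    (hcond B hB).mono fun ω hω => by simp only [Pi.mul_apply]; exact congrArg _ hω
  have tower : P[P[g * f|MeasurableSpace.comap X inferInstance]|m] =ᵐ[P] P[g * f|m] :=
    condExp_condExp_of_le hm hmX
  have key : P[g * f|m] =ᵐ[P] P[g * P[f|m]|m] :=
    tower.symm.trans (condExp_congr_ae (step1.trans step2))
  have hfm_meas : StronglyMeasurable[m] (P[f|m]) := stronglyMeasurable_condExp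
  have hmul_int : Integrable (P[f|m] * g) P := by
    have h1 : Integrable (fun x => g x * (P[f|m]) x) P :=
      Integrable.bdd_mul (c := 1) integrable_condExp (hg_meas.mono hmX).aestronglyMeasurable (Filter.Eventually.of_forall hg_bdd)
    exact h1.congr (Filter.Eventually.of_forall fun x => mul_comm _ _)
  have step3 : P[P[f|m] * g|m] =ᵐ[P] P[f|m] * P[g|m] :=
    condExp_mul_of_stronglyMeasurable_left hfm_meas hmul_int hg_int
  calc P[(Y ⁻¹' B ∩ t2).indicator (fun _ => (1 : ℝ))|m]
      = P[g * f|m] := by rw [hfg_eq]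
    _ =ᵐ[P] P[g * P[f|m]|m] := key
    _ = P[g * P[f|m]|m] := rfl
    _ =ᵐ[P] P[P[f|m] * g|m] := by rw [mul_comm]
    _ =ᵐ[P] P[f|m] * P[g|m] := step3
    _ = P[(Y ⁻¹' B).indicator (fun _ => (1:ℝ))|m] * P[t2.indicator (fun _ => (1:ℝ))|m] := by
        rw [hf_eq]
end

section
/- Let m₀ ⊆ m ⊆ σ(X) be sub-σ-algebras of 𝒜. If Y and X are conditionally independent given m₀, then Y and X are conditionally independent given m. (In particular, if S₀ ⊆ S are subspaces of ℝ^p and S₀ is a dimension reduction subspace, i.e., Y and X are conditionally independent given σ(P_{S₀}∘X), then S is also a dimension reduction subspace.) -/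
open MeasureTheory ProbabilityTheory

/-- Auxiliary: monotonicity of conditional independence in the conditioning σ-algebra,
when the larger conditioning σ-algebra is contained in the second factor. -/
theorem condIndep_mono_aux {Ω : Type*} {m₀ m mX mY : MeasurableSpace Ω}
    [mΩ : MeasurableSpace Ω] [StandardBorelSpace Ω]
    (P : Measure Ω) [IsProbabilityMeasure P]
    (h0 : m₀ ≤ m) (hm : m ≤ mX)
    (hmX : mX ≤ mΩ) (hmY : mY ≤ mΩ)
    (hCI : CondIndep m₀ mY mX ((h0.trans hm).trans hmX) P) :
    CondIndep m mY mX (hm.trans hmX) P := by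
  have hm' : m ≤ mΩ := hm.trans hmX
  have h0' : m₀ ≤ mΩ := h0.trans hm'
  rw [condIndep_iff _ _ _ hm' hmY hmX]
  rw [condIndep_iff _ _ _ h0' hmY hmX] at hCI
  intro t1 t2 ht1 ht2
  have ht1' : MeasurableSet t1 := hmY t1 ht1
  have ht2' : MeasurableSet t2 := hmX t2 ht2
  have hint1 : Integrable (t1.indicator (fun _ => (1:ℝ))) P :=
    (integrable_const (1:ℝ)).indicator ht1'
  -- Key: the conditional expectation of `1_{t1}` given `mX` equals the one given `m₀`.
  have key : (P⟦t1 | m₀⟧) =ᵐ[P] P[t1.indicator (fun _ => (1:ℝ)) | mX] := by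
    refine ae_eq_condExp_of_forall_setIntegral_eq hmX hint1
      (fun s _ _ => integrable_condExp.integrableOn) (fun u hu _ => ?_)
      (StronglyMeasurable.aestronglyMeasurable
        ((stronglyMeasurable_condExp (m := m₀)).mono (h0.trans hm)))
    have hu' : MeasurableSet u := hmX u hu
    -- ∫_u P⟦t1|m₀⟧ = ∫_u 1_{t1} for u ∈ mX
    have h1 : ∫ x in u, (P⟦t1 | m₀⟧) x ∂P
        = ∫ x, (P⟦t1 | m₀⟧) x * u.indicator (fun _ => (1:ℝ)) x ∂P := by
      rw [← integral_indicator hu']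
      congr 1
      ext x
      by_cases hx : x ∈ u <;> simp [hx]
    have h2 : Integrable ((P⟦t1 | m₀⟧) * u.indicator (fun _ => (1:ℝ))) P := by
      have he : (P⟦t1 | m₀⟧) * u.indicator (fun _ => (1:ℝ)) = u.indicator (P⟦t1 | m₀⟧) := by
        ext x; by_cases hx : x ∈ u <;> simp [hx]
      rw [he]
      exact integrable_condExp.indicator hu'
    have hpull : P[(P⟦t1 | m₀⟧) * u.indicator (fun _ => (1:ℝ)) | m₀]
        =ᵐ[P] (P⟦t1 | m₀⟧) * (P⟦u | m₀⟧) :=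
      condExp_mul_of_stronglyMeasurable_left stronglyMeasurable_condExp h2
        ((integrable_const (1:ℝ)).indicator hu')
    calc ∫ x in u, (P⟦t1 | m₀⟧) x ∂P
        = ∫ x, (P⟦t1 | m₀⟧) x * u.indicator (fun _ => (1:ℝ)) x ∂P := h1
      _ = ∫ x, (P[(P⟦t1 | m₀⟧) * u.indicator (fun _ => (1:ℝ)) | m₀]) x ∂P :=
          (integral_condExp h0').symm
      _ = ∫ x, ((P⟦t1 | m₀⟧) * (P⟦u | m₀⟧)) x ∂P := integral_congr_ae hpull
      _ = ∫ x, (P⟦t1 ∩ u | m₀⟧) x ∂P := (integral_congr_ae (hCI t1 u ht1 hu)).symm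
      _ = ∫ x, (t1 ∩ u).indicator (fun _ => (1:ℝ)) x ∂P := integral_condExp h0'
      _ = ∫ x in u, t1.indicator (fun _ => (1:ℝ)) x ∂P := by
          rw [← integral_indicator hu']
          congr 1
          ext x
          by_cases hx1 : x ∈ t1 <;> by_cases hx2 : x ∈ u <;>
            simp [Set.indicator, hx1, hx2, Set.mem_inter_iff]
  -- Tower: P⟦t1|m⟧ = P⟦t1|m₀⟧
  have htower : (P⟦t1 | m⟧) =ᵐ[P] P⟦t1 | m₀⟧ := by
    have h1 : P[P[t1.indicator (fun _ => (1:ℝ)) | mX] | m] =ᵐ[P] P⟦t1 | m⟧ :=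
      condExp_condExp_of_le hm hmX
    have h2 : P[P[t1.indicator (fun _ => (1:ℝ)) | mX] | m] =ᵐ[P] P[(P⟦t1 | m₀⟧) | m] :=
      condExp_congr_ae key.symm
    have h3 : P[(P⟦t1 | m₀⟧) | m] =ᵐ[P] P⟦t1 | m₀⟧ := by
      rw [condExp_of_stronglyMeasurable hm'
        ((stronglyMeasurable_condExp (m := m₀)).mono h0) integrable_condExp]
    exact h1.symm.trans (h2.trans h3)
  -- Now compute P⟦t1 ∩ t2 | m⟧.
  have hind : (t1 ∩ t2).indicator (fun _ => (1:ℝ))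
      = t2.indicator (t1.indicator fun _ => (1:ℝ)) := by
    rw [Set.indicator_indicator, Set.inter_comm]
  have step1 : (P⟦t1 ∩ t2 | mX⟧) =ᵐ[P] t2.indicator (P[t1.indicator (fun _ => (1:ℝ)) | mX]) := by
    rw [show (P⟦t1 ∩ t2 | mX⟧) = P[t2.indicator (t1.indicator fun _ => (1:ℝ)) | mX] by rw [hind]]
    exact condExp_indicator hint1 ht2
  have step1' : (P⟦t1 ∩ t2 | mX⟧) =ᵐ[P] t2.indicator (P⟦t1 | m₀⟧) :=
    step1.trans (by filter_upwards [key] with x hx; simp [Set.indicator, hx])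
  have hmulform : t2.indicator (P⟦t1 | m₀⟧) = (P⟦t1 | m₀⟧) * t2.indicator (fun _ => (1:ℝ)) := by
    ext x; by_cases hx : x ∈ t2 <;> simp [hx]
  have hint_mul : Integrable ((P⟦t1 | m₀⟧) * t2.indicator (fun _ => (1:ℝ))) P := by
    rw [← hmulform]; exact integrable_condExp.indicator ht2'
  have step2 : (P⟦t1 ∩ t2 | m⟧) =ᵐ[P] P[(P⟦t1 | m₀⟧) * t2.indicator (fun _ => (1:ℝ)) | m] := by
    have h1 : P[P[(t1 ∩ t2).indicator (fun _ => (1:ℝ)) | mX] | m] =ᵐ[P] P⟦t1 ∩ t2 | m⟧ :=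
      condExp_condExp_of_le hm hmX
    have h2 : P[P[(t1 ∩ t2).indicator (fun _ => (1:ℝ)) | mX] | m]
        =ᵐ[P] P[(P⟦t1 | m₀⟧) * t2.indicator (fun _ => (1:ℝ)) | m] :=
      condExp_congr_ae (step1'.trans (by rw [hmulform]))
    exact h1.symm.trans h2
  have step3 : P[(P⟦t1 | m₀⟧) * t2.indicator (fun _ => (1:ℝ)) | m]
      =ᵐ[P] (P⟦t1 | m₀⟧) * (P⟦t2 | m⟧) :=
    condExp_mul_of_stronglyMeasurable_left ((stronglyMeasurable_condExp (m := m₀)).mono h0)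
      hint_mul ((integrable_const (1:ℝ)).indicator ht2')
  refine (step2.trans step3).trans ?_
  filter_upwards [htower] with x hx
  simp [hx]

/-- If `m₀ ⊆ m ⊆ σ(X)` and `Y` and `X` are conditionally independent given `m₀`, then `Y`
and `X` are conditionally independent given `m`. -/
theorem condIndep_mono
    {Ω : Type*} {p s : ℕ} [mΩ : MeasurableSpace Ω] [StandardBorelSpace Ω]
    (P : Measure Ω) [IsProbabilityMeasure P]
    (X : Ω → EuclideanSpace ℝ (Fin p)) (Y : Ω → EuclideanSpace ℝ (Fin s))
    (hX : Measurable X) (hY : Measurable Y)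
    (m₀ m : MeasurableSpace Ω) (h0 : m₀ ≤ m) (hm : m ≤ MeasurableSpace.comap X inferInstance)
    (hCI : CondIndep m₀ (MeasurableSpace.comap Y inferInstance)
      (MeasurableSpace.comap X inferInstance) ((h0.trans hm).trans hX.comap_le) P) :
    CondIndep m (MeasurableSpace.comap Y inferInstance)
      (MeasurableSpace.comap X inferInstance) (hm.trans hX.comap_le) P :=
  condIndep_mono_aux (mΩ := mΩ) P h0 hm hX.comap_le hY.comap_le hCI
end
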